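/- For every positive integer n, the matrix U_n is invertible over ℚ and 𝓜_n = T_n · U_n⁻¹ · T_n. -/

import Mathlib

open Matrix

noncomputable section

/-- `Sn n` is the set of largest representatives of the finite classes of the
equivalence relation `i ~ j ↔ n / i = n / j` on positive integers. -/
def Sn (n : ℕ) : Finset ℕ := (Finset.Icc 1 n).filter (fun k => n / (k + 1) < n / k)

/-- The Mertens function, with `mertens 0 = 0`. -/
def mertens (m : ℕ) : ℤ := ∑ j ∈ Finset.Icc 1 m, ArithmeticFunction.moebius j

/-- The matrix `T_n` over `ℚ`, indexed by `S_n`. -/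
def Tq (n : ℕ) : Matrix (Sn n) (Sn n) ℚ :=
  fun k l => if (k : ℕ) * (l : ℕ) ≤ n then 1 else 0

/-- The matrix `U_n` over `ℚ`, with entries `⌊n/(k·l)⌋`. -/
def Uq (n : ℕ) : Matrix (Sn n) (Sn n) ℚ :=
  fun k l => ((n / ((k : ℕ) * (l : ℕ)) : ℕ) : ℚ)

/-- The matrix `𝓜_n` over `ℚ`, with entries `M(⌊n/(k·l)⌋)`. -/
def Mq (n : ℕ) : Matrix (Sn n) (Sn n) ℚ :=
  fun k l => (mertens (n / ((k : ℕ) * (l : ℕ))) : ℚ)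

namespace SnAux

lemma one_le_div {n a : ℕ} (h1 : 1 ≤ a) (h2 : a ≤ n) : 1 ≤ n / a :=
  (Nat.one_le_div_iff (by omega)).mpr h2

lemma le_div_iff {n a k : ℕ} (hk : 0 < k) : a ≤ n / k ↔ a * k ≤ n :=
  Nat.le_div_iff_mul_le hk

lemma le_rep {n a : ℕ} (h1 : 1 ≤ a) (h2 : a ≤ n) : a ≤ n / (n / a) :=
  (le_div_iff (one_le_div h1 h2)).mpr
    (by rw [mul_comm]; exact Nat.div_mul_le_self n a)

lemma rep_div_eq {n a : ℕ} (h1 : 1 ≤ a) (h2 : a ≤ n) : n / (n / (n / a)) = n / a := by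
  have hm1 : 1 ≤ n / (n / a) := le_trans h1 (le_rep h1 h2)
  refine le_antisymm (Nat.div_le_div_left (le_rep h1 h2) (by omega)) ?_
  exact (le_div_iff hm1).mpr (by rw [mul_comm]; exact Nat.div_mul_le_self n (n / a))

lemma mem_Sn_iff {n k : ℕ} : k ∈ Sn n ↔ 1 ≤ k ∧ k ≤ n ∧ n / (n / k) = k := by
  unfold Sn
  simp only [Finset.mem_filter, Finset.mem_Icc]
  constructor
  · rintro ⟨⟨h1, h2⟩, h3⟩
    refine ⟨h1, h2, ?_⟩
    have hv : 1 ≤ n / k := one_le_div h1 h2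
    refine le_antisymm ?_ (le_rep h1 h2)
    by_contra hc
    push_neg at hc
    have h4 : (k + 1) * (n / k) ≤ n := (le_div_iff hv).mp hc
    have h5 : (n / k) * (k + 1) ≤ n := by rw [mul_comm]; exact h4
    have h6 : n / k ≤ n / (k + 1) := (le_div_iff (k := k + 1) (Nat.succ_pos _)).mpr h5
    omega
  · rintro ⟨h1, h2, h3⟩
    refine ⟨⟨h1, h2⟩, ?_⟩
    have hv : 1 ≤ n / k := one_le_div h1 h2
    by_contra hc
    push_neg at hc
    have h4 : (n / k) * (k + 1) ≤ n := (le_div_iff (k := k + 1) (Nat.succ_pos _)).mp hc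
    have h5 : (k + 1) * (n / k) ≤ n := by rw [mul_comm]; exact h4
    have h6 : k + 1 ≤ n / (n / k) := (le_div_iff hv).mpr h5
    omega

lemma pred_lt {n a : ℕ} (h1 : 1 ≤ a) (h2 : a ≤ n) : n / (n / a + 1) < a := by
  by_contra hc
  push_neg at hc
  have h3 : a * (n / a + 1) ≤ n := (le_div_iff (k := n / a + 1) (Nat.succ_pos _)).mp hc
  have h4 : (n / a + 1) * a ≤ n := by rw [mul_comm]; exact h3
  have h5 : n / a + 1 ≤ n / a := (le_div_iff (k := a) (by omega)).mpr h4
  omega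

lemma unique_rep {n a m : ℕ} (ha1 : 1 ≤ a) (hm : m ∈ Sn n)
    (h1 : n / (n / m + 1) < a) (h2 : a ≤ m) : m = n / (n / a) := by
  obtain ⟨hm1, hm2, hm3⟩ := mem_Sn_iff.mp hm
  have e1 : n / m ≤ n / a := Nat.div_le_div_left h2 (by omega)
  have e2 : n / a ≤ n / m := by
    by_contra hc
    push_neg at hc
    have h3 : a * (n / a) ≤ n := by rw [mul_comm]; exact Nat.div_mul_le_self n a
    have h4 : a * (n / m + 1) ≤ n := le_trans (Nat.mul_le_mul_left a hc) h3
    have h5 : a ≤ n / (n / m + 1) := (le_div_iff (k := n / m + 1) (Nat.succ_pos _)).mpr h4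
    omega
  have e3 : n / a = n / m := le_antisymm e2 e1
  rw [e3, hm3]

lemma div_mem_Sn {n m : ℕ} (hm : m ∈ Sn n) : n / m ∈ Sn n := by
  obtain ⟨h1, h2, h3⟩ := mem_Sn_iff.mp hm
  refine mem_Sn_iff.mpr ⟨one_le_div h1 h2, Nat.div_le_self _ _, ?_⟩
  rw [h3]

lemma rep_mem_Sn {n a : ℕ} (h1 : 1 ≤ a) (h2 : a ≤ n) : n / (n / a) ∈ Sn n :=
  mem_Sn_iff.mpr ⟨le_trans h1 (le_rep h1 h2), Nat.div_le_self _ _,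
    by rw [rep_div_eq h1 h2]⟩


lemma Icc_filter_mul_le {N j : ℕ} (hj : 1 ≤ j) :
    (Finset.Icc 1 N).filter (fun i => i * j ≤ N) = Finset.Icc 1 (N / j) := by
  ext i
  simp only [Finset.mem_filter, Finset.mem_Icc]
  constructor
  · rintro ⟨⟨h1, _⟩, h3⟩
    exact ⟨h1, (Nat.le_div_iff_mul_le hj).mpr h3⟩
  · rintro ⟨h1, h2⟩
    have h3 : i * j ≤ N := (Nat.le_div_iff_mul_le hj).mp h2
    exact ⟨⟨h1, le_trans h2 (Nat.div_le_self _ _)⟩, h3⟩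

lemma filter_dvd_eq_divisors {N m : ℕ} (hm1 : 1 ≤ m) (hm2 : m ≤ N) :
    (Finset.Icc 1 N).filter (fun i => i ∣ m) = m.divisors := by
  ext d
  simp only [Finset.mem_filter, Finset.mem_Icc, Nat.mem_divisors]
  constructor
  · rintro ⟨_, h⟩; exact ⟨h, by omega⟩
  · rintro ⟨h, _⟩
    exact ⟨⟨Nat.one_le_iff_ne_zero.mpr (fun h0 => by simp [h0] at h; omega),
      le_trans (Nat.le_of_dvd (by omega) h) hm2⟩, h⟩

lemma sum_divisors_moebius (m : ℕ) (hm : m ≠ 0) :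
    ∑ d ∈ m.divisors, ArithmeticFunction.moebius d = if m = 1 then 1 else 0 := by
  have := ArithmeticFunction.moebius_mul_coe_zeta
  have h2 : (ArithmeticFunction.moebius * ↑ArithmeticFunction.zeta) m
      = (1 : ArithmeticFunction ℤ) m := by rw [this]
  rw [ArithmeticFunction.coe_mul_zeta_apply, ArithmeticFunction.one_apply] at h2
  exact h2

lemma mertens_sum {N : ℕ} (hN : 1 ≤ N) :
    ∑ j ∈ Finset.Icc 1 N, mertens (N / j) = 1 := by
  have step1 : ∑ j ∈ Finset.Icc 1 N, mertens (N / j)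
      = ∑ j ∈ Finset.Icc 1 N, ∑ i ∈ Finset.Icc 1 N,
          (if i * j ≤ N then ArithmeticFunction.moebius i else 0) := by
    refine Finset.sum_congr rfl (fun j hj => ?_)
    have hj1 : 1 ≤ j := (Finset.mem_Icc.mp hj).1
    rw [mertens, ← Icc_filter_mul_le hj1, Finset.sum_filter]
  rw [step1, Finset.sum_comm]
  have step2 : ∀ i ∈ Finset.Icc 1 N,
      (∑ j ∈ Finset.Icc 1 N, if i * j ≤ N then ArithmeticFunction.moebius i else 0)
      = ∑ m ∈ Finset.Icc 1 N, (if i ∣ m then ArithmeticFunction.moebius i else 0) := by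
    intro i hi
    have hi1 : 1 ≤ i := (Finset.mem_Icc.mp hi).1
    rw [← Finset.sum_filter, ← Finset.sum_filter, Finset.sum_const, Finset.sum_const]
    have c1 : ((Finset.Icc 1 N).filter (fun j => i * j ≤ N)).card = N / i := by
      have : (Finset.Icc 1 N).filter (fun j => i * j ≤ N)
          = (Finset.Icc 1 N).filter (fun j => j * i ≤ N) := by
        apply Finset.filter_congr; intro j _; rw [mul_comm]
      rw [this, Icc_filter_mul_le hi1, Nat.card_Icc, Nat.add_sub_cancel]
    have c2 : ((Finset.Icc 1 N).filter (fun m => i ∣ m)).card = N / i := by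
      have : Finset.Icc 1 N = Finset.Ioc 0 N := by ext x; simp [Finset.mem_Icc, Finset.mem_Ioc]; omega
      rw [this]
      exact Nat.Ioc_filter_dvd_card_eq_div N i
    rw [c1, c2]
  rw [Finset.sum_congr rfl step2, Finset.sum_comm]
  have step3 : ∀ m ∈ Finset.Icc 1 N,
      (∑ i ∈ Finset.Icc 1 N, if i ∣ m then ArithmeticFunction.moebius i else 0)
      = if m = 1 then 1 else 0 := by
    intro m hm
    obtain ⟨hm1, hm2⟩ := Finset.mem_Icc.mp hm
    rw [← Finset.sum_filter, filter_dvd_eq_divisors hm1 hm2]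
    exact sum_divisors_moebius m (by omega)
  rw [Finset.sum_congr rfl step3, Finset.sum_ite_eq' (Finset.Icc 1 N) 1 (fun _ => (1:ℤ))]
  simp [hN]

/-- the count-by-intervals rewriting of a single B entry -/
lemma B_entry_card {n m l : ℕ} (hm : m ∈ Sn n) (hl : 1 ≤ l) :
    ((m / l : ℕ) : ℚ) - ((n / (n / m + 1) / l : ℕ) : ℚ)
      = (((Finset.Icc 1 (n / l)).filter
          (fun j => n / (n / m + 1) < j * l ∧ j * l ≤ m)).card : ℚ) := by
  obtain ⟨hm1, hm2, _⟩ := mem_Sn_iff.mp hm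
  set p := n / (n / m + 1) with hp
  have hpm : p ≤ m := le_of_lt (pred_lt hm1 hm2)
  have hfil : (Finset.Icc 1 (n / l)).filter (fun j => p < j * l ∧ j * l ≤ m)
      = Finset.Ioc (p / l) (m / l) := by
    ext j
    simp only [Finset.mem_filter, Finset.mem_Icc, Finset.mem_Ioc]
    constructor
    · rintro ⟨⟨_, _⟩, h3, h4⟩
      exact ⟨(Nat.div_lt_iff_lt_mul hl).mpr h3, (Nat.le_div_iff_mul_le hl).mpr h4⟩
    · rintro ⟨h1, h2⟩
      refine ⟨⟨(Nat.zero_le _).trans_lt h1, le_trans h2 (Nat.div_le_div_right hm2)⟩,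
        (Nat.div_lt_iff_lt_mul hl).mp h1, (Nat.le_div_iff_mul_le hl).mp h2⟩
  rw [hfil, Nat.card_Ioc, Nat.cast_sub (Nat.div_le_div_right hpm)]

lemma key (n : ℕ) (h : ℕ → ℚ)
    (hconst : ∀ a b : ℕ, 1 ≤ a → a ≤ n → 1 ≤ b → b ≤ n → n / a = n / b → h a = h b)
    (l : ℕ) (hl1 : 1 ≤ l) :
    ∑ m ∈ Sn n, h m * (((m / l : ℕ) : ℚ) - ((n / (n / m + 1) / l : ℕ) : ℚ))
      = ∑ j ∈ Finset.Icc 1 (n / l), h (j * l) := by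
  have step1 : ∀ m ∈ Sn n,
      h m * (((m / l : ℕ) : ℚ) - ((n / (n / m + 1) / l : ℕ) : ℚ))
      = ∑ j ∈ Finset.Icc 1 (n / l),
          (if n / (n / m + 1) < j * l ∧ j * l ≤ m then h m else 0) := by
    intro m hm
    rw [B_entry_card hm hl1, ← Finset.sum_filter, Finset.sum_const, nsmul_eq_mul, mul_comm]
  rw [Finset.sum_congr rfl step1, Finset.sum_comm]
  refine Finset.sum_congr rfl (fun j hj => ?_)
  obtain ⟨hj1, hj2⟩ := Finset.mem_Icc.mp hj
  set a := j * l with ha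
  have ha1 : 1 ≤ a := le_trans hj1 (Nat.le_mul_of_pos_right j hl1)
  have ha2 : a ≤ n := le_trans ((Nat.le_div_iff_mul_le hl1).mp hj2) (le_refl n)
  set m₀ := n / (n / a) with hm₀
  have hm₀mem : m₀ ∈ Sn n := rep_mem_Sn ha1 ha2
  have hdiveq : n / m₀ = n / a := rep_div_eq ha1 ha2
  rw [Finset.sum_eq_single_of_mem m₀ hm₀mem]
  · have hcond : n / (n / m₀ + 1) < a ∧ a ≤ m₀ := by
      constructor
      · rw [hdiveq]; exact pred_lt ha1 ha2
      · exact le_rep ha1 ha2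
    rw [if_pos hcond]
    obtain ⟨hb1, hb2, _⟩ := mem_Sn_iff.mp hm₀mem
    exact hconst m₀ a hb1 hb2 ha1 ha2 hdiveq
  · intro m hm hne
    rw [if_neg]
    rintro ⟨h1, h2⟩
    exact hne (unique_rep ha1 hm h1 h2)


def sigmaPerm (n : ℕ) : Equiv.Perm (Sn n) where
  toFun m := ⟨n / (m : ℕ), div_mem_Sn m.2⟩
  invFun m := ⟨n / (m : ℕ), div_mem_Sn m.2⟩
  left_inv m := Subtype.ext ((mem_Sn_iff.mp m.2).2.2)
  right_inv m := Subtype.ext ((mem_Sn_iff.mp m.2).2.2)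

lemma det_Tq_ne_zero (n : ℕ) : (Tq n).det ≠ 0 := by
  have key : ∀ (i j : (Sn n)), ((Tq n).submatrix id (sigmaPerm n)) i j
      = if (i : ℕ) ≤ (j : ℕ) then 1 else 0 := by
    intro i j
    obtain ⟨hi1, hi2, hi3⟩ := mem_Sn_iff.mp i.2
    obtain ⟨hj1, hj2, hj3⟩ := mem_Sn_iff.mp j.2
    have hdj : 1 ≤ n / (j : ℕ) := one_le_div hj1 hj2
    have hcond : (i : ℕ) * (n / (j : ℕ)) ≤ n ↔ (i : ℕ) ≤ (j : ℕ) := by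
      rw [← Nat.le_div_iff_mul_le hdj, hj3]
    simp only [Matrix.submatrix_apply, id_eq, sigmaPerm, Equiv.coe_fn_mk, Tq]
    simp only [hcond]
  have htri : ((Tq n).submatrix id (sigmaPerm n)).BlockTriangular id := by
    intro i j hij
    rw [key i j, if_neg]
    exact Nat.not_le.mpr (Subtype.coe_lt_coe.mpr hij)
  have hdet1 : ((Tq n).submatrix id (sigmaPerm n)).det = 1 := by
    rw [Matrix.det_of_upperTriangular htri]
    refine Finset.prod_eq_one (fun i _ => ?_)
    rw [key i i, if_pos le_rfl]
  have hperm := Matrix.det_permute' (sigmaPerm n) (Tq n)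
  rw [hdet1] at hperm
  intro hc
  rw [hc, mul_zero] at hperm
  norm_num at hperm


/-- The auxiliary matrix `B`. -/
def Bq (n : ℕ) : Matrix (Sn n) (Sn n) ℚ :=
  fun m l => (((m : ℕ) / (l : ℕ) : ℕ) : ℚ) - ((n / (n / (m : ℕ) + 1) / (l : ℕ) : ℕ) : ℚ)

lemma TB_eq_U (n : ℕ) : Tq n * Bq n = Uq n := by
  ext k l
  obtain ⟨hk1, hk2, _⟩ := mem_Sn_iff.mp k.2
  obtain ⟨hl1, hl2, _⟩ := mem_Sn_iff.mp l.2
  rw [Matrix.mul_apply]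
  have e1 : ∑ m : (Sn n), Tq n k m * Bq n m l
      = ∑ m ∈ Sn n, (fun a : ℕ => (if (k : ℕ) * a ≤ n then (1:ℚ) else 0)
          * ((((a / (l : ℕ) : ℕ)) : ℚ) - ((n / (n / a + 1) / (l : ℕ) : ℕ) : ℚ))) m := by
    rw [← Finset.sum_coe_sort (Sn n)]
    exact Finset.sum_congr rfl (fun m _ => rfl)
  rw [e1]
  have hconst : ∀ a b : ℕ, 1 ≤ a → a ≤ n → 1 ≤ b → b ≤ n → n / a = n / b →
      (if (k : ℕ) * a ≤ n then (1:ℚ) else 0) = (if (k : ℕ) * b ≤ n then (1:ℚ) else 0) := by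
    intro a b ha1 ha2 hb1 hb2 hab
    have h1 : (k : ℕ) * a ≤ n ↔ (k : ℕ) ≤ n / a := by
      rw [Nat.le_div_iff_mul_le ha1, mul_comm]
    have h2 : (k : ℕ) * b ≤ n ↔ (k : ℕ) ≤ n / b := by
      rw [Nat.le_div_iff_mul_le hb1, mul_comm]
    simp only [h1, h2, hab]
  have e2 := key n (fun a => if (k : ℕ) * a ≤ n then (1:ℚ) else 0) hconst (l : ℕ) hl1
  simp only at e2 ⊢
  rw [e2]
  have e3 : ∀ j, (k : ℕ) * (j * (l : ℕ)) ≤ n ↔ j * ((k : ℕ) * (l : ℕ)) ≤ n := by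
    intro j; rw [show (k : ℕ) * (j * (l : ℕ)) = j * ((k : ℕ) * (l : ℕ)) by ring]
  have e4 : ∑ j ∈ Finset.Icc 1 (n / (l : ℕ)),
      (if (k : ℕ) * (j * (l : ℕ)) ≤ n then (1:ℚ) else 0)
      = ((Finset.Icc 1 (n / (l : ℕ))).filter
          (fun j => j * ((k : ℕ) * (l : ℕ)) ≤ n)).card := by
    have efil : (Finset.Icc 1 (n / (l : ℕ))).filter (fun j => (k : ℕ) * (j * (l : ℕ)) ≤ n)
        = (Finset.Icc 1 (n / (l : ℕ))).filter (fun j => j * ((k : ℕ) * (l : ℕ)) ≤ n) :=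
      Finset.filter_congr (fun j _ => by simp only [e3 j])
    rw [Finset.sum_boole, efil]
  rw [e4]
  have hkl1 : 1 ≤ (k : ℕ) * (l : ℕ) := Nat.one_le_iff_ne_zero.mpr (by positivity)
  have e5 : (Finset.Icc 1 (n / (l : ℕ))).filter (fun j => j * ((k : ℕ) * (l : ℕ)) ≤ n)
      = Finset.Icc 1 (n / ((k : ℕ) * (l : ℕ))) := by
    ext j
    simp only [Finset.mem_filter, Finset.mem_Icc]
    constructor
    · rintro ⟨⟨h1, _⟩, h3⟩
      exact ⟨h1, (Nat.le_div_iff_mul_le hkl1).mpr h3⟩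
    · rintro ⟨h1, h2⟩
      have h3 : j * ((k : ℕ) * (l : ℕ)) ≤ n := (Nat.le_div_iff_mul_le hkl1).mp h2
      refine ⟨⟨h1, ?_⟩, h3⟩
      refine le_trans h2 (Nat.div_le_div_left ?_ hl1)
      exact Nat.le_mul_of_pos_left _ hk1
    -- n / (k*l) ≤ n / l since l ≤ k*l
  rw [e5, Nat.card_Icc, Nat.add_sub_cancel]
  rfl

lemma MB_eq_T (n : ℕ) : Mq n * Bq n = Tq n := by
  ext k l
  obtain ⟨hk1, hk2, _⟩ := mem_Sn_iff.mp k.2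
  obtain ⟨hl1, hl2, _⟩ := mem_Sn_iff.mp l.2
  rw [Matrix.mul_apply]
  have e1 : ∑ m : (Sn n), Mq n k m * Bq n m l
      = ∑ m ∈ Sn n, (fun a : ℕ => ((mertens (n / ((k : ℕ) * a)) : ℤ) : ℚ)
          * ((((a / (l : ℕ) : ℕ)) : ℚ) - ((n / (n / a + 1) / (l : ℕ) : ℕ) : ℚ))) m := by
    rw [← Finset.sum_coe_sort (Sn n)]
    exact Finset.sum_congr rfl (fun m _ => rfl)
  rw [e1]
  have hconst : ∀ a b : ℕ, 1 ≤ a → a ≤ n → 1 ≤ b → b ≤ n → n / a = n / b →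
      ((mertens (n / ((k : ℕ) * a)) : ℤ) : ℚ) = ((mertens (n / ((k : ℕ) * b)) : ℤ) : ℚ) := by
    intro a b ha1 ha2 hb1 hb2 hab
    have h1 : n / ((k : ℕ) * a) = n / a / (k : ℕ) := by
      rw [Nat.div_div_eq_div_mul, mul_comm]
    have h2 : n / ((k : ℕ) * b) = n / b / (k : ℕ) := by
      rw [Nat.div_div_eq_div_mul, mul_comm]
    rw [h1, h2, hab]
  have e2 := key n (fun a => ((mertens (n / ((k : ℕ) * a)) : ℤ) : ℚ)) hconst (l : ℕ) hl1
  simp only at e2 ⊢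
  rw [e2]
  have e3 : ∀ j : ℕ, n / ((k : ℕ) * (j * (l : ℕ))) = (n / ((k : ℕ) * (l : ℕ))) / j := by
    intro j
    rw [Nat.div_div_eq_div_mul]
    congr 1
    ring
  set N' := n / ((k : ℕ) * (l : ℕ)) with hN'
  have e4 : ∑ j ∈ Finset.Icc 1 (n / (l : ℕ)),
        ((mertens (n / ((k : ℕ) * (j * (l : ℕ)))) : ℤ) : ℚ)
      = ∑ j ∈ Finset.Icc 1 (n / (l : ℕ)), ((mertens (N' / j) : ℤ) : ℚ) := by
    refine Finset.sum_congr rfl (fun j _ => ?_)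
    rw [e3 j]
  rw [e4]
  have hsub : Finset.Icc 1 N' ⊆ Finset.Icc 1 (n / (l : ℕ)) := by
    apply Finset.Icc_subset_Icc_right
    rw [hN']
    exact Nat.div_le_div_left (Nat.le_mul_of_pos_left _ hk1) hl1
  have e5 : ∑ j ∈ Finset.Icc 1 (n / (l : ℕ)), ((mertens (N' / j) : ℤ) : ℚ)
      = ∑ j ∈ Finset.Icc 1 N', ((mertens (N' / j) : ℤ) : ℚ) := by
    refine (Finset.sum_subset hsub (fun j hj hj2 => ?_)).symm
    have hj1 : 1 ≤ j := (Finset.mem_Icc.mp hj).1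
    have : N' < j := by
      simp only [Finset.mem_Icc] at hj2
      omega
    rw [Nat.div_eq_of_lt this]
    simp [mertens]
  rw [e5]
  by_cases hkl : (k : ℕ) * (l : ℕ) ≤ n
  · have hN1 : 1 ≤ N' := one_le_div (Nat.one_le_iff_ne_zero.mpr (by positivity)) hkl
    rw [show ∑ j ∈ Finset.Icc 1 N', ((mertens (N' / j) : ℤ) : ℚ)
        = ((∑ j ∈ Finset.Icc 1 N', mertens (N' / j) : ℤ) : ℚ) by push_cast; ring,
      mertens_sum hN1]
    simp [Tq, hkl]
  · have hN0 : N' = 0 := by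
      rw [hN']
      exact Nat.div_eq_of_lt (by omega)
    rw [hN0]
    simp [Tq, hkl]


end SnAux

open SnAux in
theorem stmt0 (n : ℕ) (hn : 0 < n) :
    IsUnit (Uq n) ∧ Mq n = Tq n * (Uq n)⁻¹ * Tq n := by
  have hT : IsUnit (Tq n).det := isUnit_iff_ne_zero.mpr (det_Tq_ne_zero n)
  have hMB := MB_eq_T n
  have hTB := TB_eq_U n
  have hBdet : (Bq n).det ≠ 0 := by
    have h := congrArg Matrix.det hMB
    rw [Matrix.det_mul] at h
    intro hc
    rw [hc, mul_zero] at h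
    exact det_Tq_ne_zero n h.symm
  have hB : IsUnit (Bq n).det := isUnit_iff_ne_zero.mpr hBdet
  have hU : IsUnit (Uq n).det := by
    rw [← hTB, Matrix.det_mul]
    exact hT.mul hB
  refine ⟨(Matrix.isUnit_iff_isUnit_det _).mpr hU, ?_⟩
  have hUinv : (Uq n)⁻¹ = (Bq n)⁻¹ * (Tq n)⁻¹ := by
    rw [← hTB, Matrix.mul_inv_rev]
  have hM : Mq n = Tq n * (Bq n)⁻¹ := by
    calc Mq n = Mq n * (Bq n * (Bq n)⁻¹) := by
          rw [Matrix.mul_nonsing_inv _ hB, Matrix.mul_one]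
      _ = (Mq n * Bq n) * (Bq n)⁻¹ := by rw [Matrix.mul_assoc]
      _ = Tq n * (Bq n)⁻¹ := by rw [hMB]
  rw [hM, hUinv, ← Matrix.mul_assoc (Tq n) ((Bq n)⁻¹) ((Tq n)⁻¹),
    Matrix.mul_assoc (Tq n * (Bq n)⁻¹) ((Tq n)⁻¹) (Tq n),
    Matrix.nonsing_inv_mul _ hT, Matrix.mul_one]
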